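/- Let k be an algebraically closed field of characteristic zero, complete with respect to a non-Archimedean (ultrametric) multiplicative norm ‖·‖, and let p be a prime with ‖(p : k)‖ < 1. Let f, g ∈ k[X] be coprime polynomials with d = max(natDegree f, natDegree g) and p ≤ d. Assume: (i) g.eval x ≠ 0 for every x ∈ k with ‖x‖ < 1 (φ = f/g has no pole in the open unit disk), and (ii) (derivative f · g − f · derivative g).eval x ≠ 0 for every x ∈ k with ‖x‖ < 1 (φ has no critical point in the open unit disk). Then φ is injective on the open disk of radius r_p = ‖(p : k)‖^(1/(p−1)): for all x, y ∈ k with ‖x‖ < ‖(p : k)‖^((1 : ℝ)/(p−1)) and ‖y‖ < ‖(p : k)‖^((1 : ℝ)/(p−1)), if f.eval x · g.eval y = f.eval y · g.eval x then x = y. -/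

import Mathlib

open Polynomial


section Aux
variable {k : Type*} [NormedField k] [IsUltrametricDist k]

lemma aux_norm_add_eq_left {a b : k} (h : ‖b‖ < ‖a‖) : ‖a + b‖ = ‖a‖ := by
  have h1 : ‖a‖ ≤ ‖a + b‖ := by
    have h2 := IsUltrametricDist.norm_add_le_max (a + b) (-b)
    simp only [add_neg_cancel_right, norm_neg] at h2
    by_contra hc
    push_neg at hc
    exact absurd (h2.trans_lt (max_lt hc h)) (lt_irrefl _)
  exact le_antisymm ((IsUltrametricDist.norm_add_le_max a b).trans (max_le le_rfl h.le)) h1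

lemma aux_multiset_sum_norm_le (s : Multiset k) {C : ℝ} (h0 : 0 ≤ C)
    (h : ∀ x ∈ s, ‖x‖ ≤ C) : ‖s.sum‖ ≤ C := by
  induction s using Multiset.induction with
  | empty => simpa using h0
  | cons a t ih =>
    rw [Multiset.sum_cons]
    refine (IsUltrametricDist.norm_add_le_max _ _).trans (max_le (h a (Multiset.mem_cons_self a t)) ?_)
    exact ih fun x hx => h x (Multiset.mem_cons_of_mem hx)

omit [IsUltrametricDist k] in
lemma aux_norm_multiset_prod (s : Multiset k) : ‖s.prod‖ = (s.map (fun z => ‖z‖)).prod := by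
  induction s using Multiset.induction with
  | empty => simp
  | cons a t ih => simp [norm_mul, ih]

end Aux

section Aux
variable {k : Type*} [NormedField k] [IsUltrametricDist k]

lemma aux_multiset_sum_norm_le' (s : Multiset k) {C : ℝ} (h0 : 0 ≤ C)
    (h : ∀ x ∈ s, ‖x‖ ≤ C) : ‖s.sum‖ ≤ C := by
  induction s using Multiset.induction with
  | empty => simpa using h0
  | cons a t ih =>
    rw [Multiset.sum_cons]
    refine (IsUltrametricDist.norm_add_le_max _ _).trans (max_le (h a (Multiset.mem_cons_self a t)) ?_)
    exact ih fun x hx => h x (Multiset.mem_cons_of_mem hx)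

omit [IsUltrametricDist k] in
lemma aux_norm_multiset_prod' (s : Multiset k) : ‖s.prod‖ = (s.map (fun z => ‖z‖)).prod := by
  induction s using Multiset.induction with
  | empty => simp
  | cons a t ih => simp [norm_mul, ih]

lemma aux_one_le_multiset_prod (s : Multiset ℝ) (h : ∀ x ∈ s, 1 ≤ x) : 1 ≤ s.prod := by
  induction s using Multiset.induction with
  | empty => simp
  | cons a t ih =>
    rw [Multiset.prod_cons]
    have ha := h a (Multiset.mem_cons_self a t)
    have ht := ih fun x hx => h x (Multiset.mem_cons_of_mem hx)
    nlinarith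

variable [IsAlgClosed k]

/-- If a polynomial has no zero in the open unit ball, all its coefficients are
dominated by the constant coefficient. -/
lemma aux_coeff_le (q : k[X]) (hq : ∀ z : k, ‖z‖ < 1 → q.eval z ≠ 0) (m : ℕ) :
    ‖q.coeff m‖ ≤ ‖q.coeff 0‖ := by
  have hq0 : q ≠ 0 := fun h => hq 0 (by simp) (by simp [h])
  have hsplit : Splits q := IsAlgClosed.splits q
  have hcard : Multiset.card q.roots = q.natDegree := (splits_iff_card_roots).mp hsplit
  have hroots : ∀ r ∈ q.roots, (1:ℝ) ≤ ‖r‖ := by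
    intro r hr
    by_contra hc
    exact hq r (not_le.mp hc) (isRoot_of_mem_roots hr)
  set P : ℝ := (q.roots.map (fun z => ‖z‖)).prod with hP
  have hP1 : (1:ℝ) ≤ P := by
    rw [hP]
    exact aux_one_le_multiset_prod _ (by
      intro x hx
      obtain ⟨r, hr, rfl⟩ := Multiset.mem_map.mp hx
      exact hroots r hr)
  have hfac := hsplit.eq_prod_roots
  -- constant coefficient
  have hc0 : ‖q.coeff 0‖ = ‖q.leadingCoeff‖ * P := by
    rw [coeff_zero_eq_eval_zero]
    conv_lhs => rw [hfac]
    rw [eval_mul, eval_C, norm_mul]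
    congr 1
    rw [eval_multiset_prod, Multiset.map_map, aux_norm_multiset_prod', Multiset.map_map, hP]
    congr 1
    ext r
    simp [norm_neg, zero_sub]
  -- esymm bound
  have hesymm : ∀ j : ℕ, ‖q.roots.esymm j‖ ≤ P := by
    intro j
    rw [Multiset.esymm]
    refine aux_multiset_sum_norm_le' _ (le_trans zero_le_one hP1) ?_
    intro x hx
    obtain ⟨t, ht, rfl⟩ := Multiset.mem_map.mp hx
    have hts : t ≤ q.roots := (Multiset.mem_powersetCard.mp ht).1
    obtain ⟨u, hu⟩ := Multiset.le_iff_exists_add.mp hts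
    rw [aux_norm_multiset_prod']
    have hsplitP : P = (t.map (fun z => ‖z‖)).prod * (u.map (fun z => ‖z‖)).prod := by
      rw [hP, hu, Multiset.map_add, Multiset.prod_add]
    rw [hsplitP]
    have h1u : (1:ℝ) ≤ (u.map (fun z => ‖z‖)).prod := by
      refine aux_one_le_multiset_prod _ ?_
      intro x hx
      obtain ⟨r, hr, rfl⟩ := Multiset.mem_map.mp hx
      exact hroots r (hu ▸ Multiset.mem_add.mpr (Or.inr hr))
    have h0t : (0:ℝ) ≤ (t.map (fun z => ‖z‖)).prod :=
      Multiset.prod_nonneg (by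
        intro x hx
        obtain ⟨r, _, rfl⟩ := Multiset.mem_map.mp hx
        exact norm_nonneg r)
    nlinarith
  -- now the coefficient bound
  rcases le_or_gt m q.natDegree with hm | hm
  · conv_lhs => rw [hfac]
    rw [coeff_C_mul, norm_mul, hc0]
    refine mul_le_mul_of_nonneg_left ?_ (norm_nonneg _)
    rw [Multiset.prod_X_sub_C_coeff _ (by rw [hcard]; exact hm), norm_mul, norm_pow, norm_neg,
      norm_one, one_pow, one_mul]
    exact hesymm _
  · rw [coeff_eq_zero_of_natDegree_lt hm, norm_zero, hc0]
    positivity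
end Aux
open Polynomial

section Aux
variable {k : Type*} [NormedField k] [IsUltrametricDist k]

/-- Gauss-norm bound for products of power series. -/
lemma aux_coeff_mul_le (A B : PowerSeries k) {α β : ℝ} (hα : 0 ≤ α) (hβ : 0 ≤ β)
    (hA : ∀ n, ‖PowerSeries.coeff n A‖ ≤ α) (hB : ∀ n, ‖PowerSeries.coeff n B‖ ≤ β) :
    ∀ n, ‖PowerSeries.coeff n (A * B)‖ ≤ α * β := by
  intro n
  rw [PowerSeries.coeff_mul]
  refine IsUltrametricDist.norm_sum_le_of_forall_le_of_nonneg (by positivity) ?_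
  intro i _
  rw [norm_mul]
  exact mul_le_mul (hA _) (hB _) (norm_nonneg _) hα

/-- Coefficients of the inverse of a power series with no small slopes. -/
lemma aux_coeff_inv_le (G : PowerSeries k) (hg0 : PowerSeries.constantCoeff G ≠ 0)
    (hG : ∀ n, ‖PowerSeries.coeff n G‖ ≤ ‖PowerSeries.constantCoeff G‖) :
    ∀ n, ‖PowerSeries.coeff n G⁻¹‖ ≤ ‖PowerSeries.constantCoeff G‖⁻¹ := by
  intro n
  induction n using Nat.strong_induction_on with
  | _ n ih =>
    rw [PowerSeries.coeff_inv]
    split_ifs with h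
    · rw [norm_inv]
    · rw [norm_mul, norm_neg, norm_inv]
      have h1 : ‖∑ x ∈ Finset.HasAntidiagonal.antidiagonal n,
          if x.2 < n then PowerSeries.coeff x.1 G * PowerSeries.coeff x.2 G⁻¹ else 0‖ ≤ 1 := by
        refine IsUltrametricDist.norm_sum_le_of_forall_le_of_nonneg zero_le_one ?_
        intro i _
        split_ifs with hi
        · rw [norm_mul]
          calc ‖PowerSeries.coeff i.1 G‖ * ‖PowerSeries.coeff i.2 G⁻¹‖
              ≤ ‖PowerSeries.constantCoeff G‖ * ‖PowerSeries.constantCoeff G‖⁻¹ :=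
            mul_le_mul (hG _) (ih i.2 hi) (norm_nonneg _) (norm_nonneg _)
            _ = 1 := mul_inv_cancel₀ (norm_ne_zero_iff.mpr hg0)
        · simp
      calc ‖PowerSeries.constantCoeff G‖⁻¹ * ‖∑ x ∈ Finset.HasAntidiagonal.antidiagonal n,
          if x.2 < n then PowerSeries.coeff x.1 G * PowerSeries.coeff x.2 G⁻¹ else 0‖
          ≤ ‖PowerSeries.constantCoeff G‖⁻¹ * 1 := by
            exact mul_le_mul_of_nonneg_left h1 (by positivity)
        _ = ‖PowerSeries.constantCoeff G‖⁻¹ := mul_one _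
end Aux

section Aux
variable {k : Type*} [NormedField k] [IsUltrametricDist k] [CharZero k]

lemma aux_norm_coprime (p : ℕ) (hp : p.Prime) (hpk : ‖(p : k)‖ < 1)
    {m : ℕ} (hm : ¬ p ∣ m) : ‖(m : k)‖ = 1 := by
  have hco : Nat.Coprime p m := (Nat.Prime.coprime_iff_not_dvd hp).mpr hm
  have hcoZ : IsCoprime (p : ℤ) (m : ℤ) := by
    rw [Int.isCoprime_iff_gcd_eq_one]
    simpa using hco
  obtain ⟨a, b, hab⟩ := hcoZ
  have habk : (a : k) * (p : k) + (b : k) * (m : k) = 1 := by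
    have := congrArg (fun z : ℤ => (z : k)) hab
    push_cast at this
    simpa using this
  have hm1 : ‖(m : k)‖ ≤ 1 := IsUltrametricDist.norm_natCast_le_one k m
  rcases lt_or_eq_of_le hm1 with hlt | heq
  · exfalso
    have h1 : (1 : ℝ) = ‖(a : k) * (p : k) + (b : k) * (m : k)‖ := by rw [habk, norm_one]
    have h2 : ‖(a : k) * (p : k) + (b : k) * (m : k)‖ < 1 := by
      refine lt_of_le_of_lt (IsUltrametricDist.norm_add_le_max _ _) (max_lt ?_ ?_)
      · rw [norm_mul]
        calc ‖(a : k)‖ * ‖(p : k)‖ ≤ 1 * ‖(p : k)‖ :=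
              mul_le_mul_of_nonneg_right (IsUltrametricDist.norm_intCast_le_one k a) (norm_nonneg _)
          _ = ‖(p : k)‖ := one_mul _
          _ < 1 := hpk
      · rw [norm_mul]
        calc ‖(b : k)‖ * ‖(m : k)‖ ≤ 1 * ‖(m : k)‖ :=
              mul_le_mul_of_nonneg_right (IsUltrametricDist.norm_intCast_le_one k b) (norm_nonneg _)
          _ = ‖(m : k)‖ := one_mul _
          _ < 1 := hlt
    linarith
  · exact heq

lemma aux_rho_pow_le (p : ℕ) (hp : p.Prime) (hpk : ‖(p : k)‖ < 1) {n : ℕ} (hn : 1 ≤ n) :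
    (‖(p : k)‖ ^ ((1 : ℝ) / ((p : ℝ) - 1))) ^ (n - 1) ≤ ‖(n : k)‖ := by
  have hp2 : 2 ≤ p := hp.two_le
  have hpk0 : 0 < ‖(p : k)‖ := norm_pos_iff.mpr (Nat.cast_ne_zero.mpr hp.pos.ne')
  set v := n.factorization p with hv
  set m := n / p ^ v with hmdef
  have hnm : p ^ v * m = n := Nat.ordProj_mul_ordCompl_eq_self n p
  have hpm : ¬ p ∣ m := Nat.not_dvd_ordCompl hp (Nat.one_le_iff_ne_zero.mp hn)
  have hnormn : ‖(n : k)‖ = ‖(p : k)‖ ^ v := by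
    rw [← hnm]
    push_cast
    rw [norm_mul, norm_pow, aux_norm_coprime p hp hpk hpm, mul_one]
  -- p ^ v ≤ n
  have hpvn : p ^ v ≤ n := Nat.le_of_dvd (Nat.lt_of_lt_of_le Nat.zero_lt_one hn) (Nat.ordProj_dvd n p)
  -- v * (p - 1) ≤ n - 1 over ℝ
  have hkey : (v : ℝ) * ((p : ℝ) - 1) ≤ (n : ℝ) - 1 := by
    have h1 : (1 : ℝ) + (v : ℝ) * ((p : ℝ) - 1) ≤ (1 + ((p : ℝ) - 1)) ^ v :=
      one_add_mul_le_pow (by norm_num; linarith [show (2:ℝ) ≤ (p:ℝ) from by exact_mod_cast hp2]) v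
    have h2 : (1 + ((p : ℝ) - 1)) ^ v = ((p ^ v : ℕ) : ℝ) := by push_cast; ring_nf
    have h3 : ((p ^ v : ℕ) : ℝ) ≤ (n : ℝ) := Nat.cast_le.mpr hpvn
    linarith
  have hexp : (v : ℝ) ≤ ((n : ℝ) - 1) * ((1 : ℝ) / ((p : ℝ) - 1)) := by
    have hp1 : (0 : ℝ) < (p : ℝ) - 1 := by
      have : (2:ℝ) ≤ (p:ℝ) := by exact_mod_cast hp2
      linarith
    rw [mul_one_div, le_div_iff₀ hp1]
    linarith
  rw [hnormn]
  calc (‖(p : k)‖ ^ ((1 : ℝ) / ((p : ℝ) - 1))) ^ (n - 1)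
      = ‖(p : k)‖ ^ (((n - 1 : ℕ) : ℝ) * ((1 : ℝ) / ((p : ℝ) - 1))) := by
        rw [mul_comm, Real.rpow_mul hpk0.le, Real.rpow_natCast]
    _ ≤ ‖(p : k)‖ ^ ((v : ℝ)) := by
        refine Real.rpow_le_rpow_of_exponent_ge hpk0 hpk.le ?_
        have : ((n - 1 : ℕ) : ℝ) = (n : ℝ) - 1 := by
          rw [Nat.cast_sub hn, Nat.cast_one]
        rw [this]
        exact hexp
    _ = ‖(p : k)‖ ^ v := Real.rpow_natCast _ v
end Aux

section MainProof
variable {k : Type*} [NormedField k] [IsUltrametricDist k] [IsAlgClosed k] [CharZero k]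

set_option maxHeartbeats 1000000 in
theorem stmt4' (p : ℕ) (hp : p.Prime) (hpk : ‖(p : k)‖ < 1)
    (f g : Polynomial k)
    (hpole : ∀ x : k, ‖x‖ < 1 → g.eval x ≠ 0)
    (hcrit : ∀ x : k, ‖x‖ < 1 → (derivative f * g - f * derivative g).eval x ≠ 0) :
    ∀ x y : k, ‖x‖ < ‖(p : k)‖ ^ ((1 : ℝ) / ((p : ℝ) - 1)) →
      ‖y‖ < ‖(p : k)‖ ^ ((1 : ℝ) / ((p : ℝ) - 1)) →
      f.eval x * g.eval y = f.eval y * g.eval x → x = y := by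
  intro x y hx hy hxy
  by_contra hne
  set ρ : ℝ := ‖(p : k)‖ ^ ((1 : ℝ) / ((p : ℝ) - 1)) with hρdef
  have hp2 : 2 ≤ p := hp.two_le
  have hpR : (2:ℝ) ≤ (p:ℝ) := by exact_mod_cast hp2
  have hpk0 : 0 < ‖(p : k)‖ := norm_pos_iff.mpr (Nat.cast_ne_zero.mpr hp.pos.ne')
  have hρpos : 0 < ρ := Real.rpow_pos_of_pos hpk0 _
  have hρ1 : ρ < 1 := Real.rpow_lt_one (norm_nonneg _) hpk (div_pos one_pos (by linarith))
  have hx1 : ‖x‖ < 1 := hx.trans hρ1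
  have hy1 : ‖y‖ < 1 := hy.trans hρ1
  have hgy : g.eval y ≠ 0 := hpole y hy1
  -- the auxiliary polynomial h
  set h : k[X] := C (g.eval y) * f - C (f.eval y) * g with hhdef
  have hhy : h.eval y = 0 := by simp [hhdef]; ring
  have hhx : h.eval x = 0 := by simp only [hhdef, eval_sub, eval_mul, eval_C]; linear_combination hxy
  set W : k[X] := derivative f * g - f * derivative g with hWdef
  have hWh : derivative h * g - h * derivative g = C (g.eval y) * W := by
    simp only [hhdef, hWdef, derivative_sub, derivative_mul, Polynomial.derivative_C, zero_mul, zero_add]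
    ring
  -- shifted polynomials
  set H : k[X] := h.comp (X + C y) with hHdef
  set G : k[X] := g.comp (X + C y) with hGdef
  set Ω : k[X] := (C (g.eval y) * W).comp (X + C y) with hΩdef
  have heval : ∀ (q : k[X]) (u : k), (q.comp (X + C y)).eval u = q.eval (u + y) := by
    intro q u; simp [eval_comp]
  have hsmall : ∀ u : k, ‖u‖ < 1 → ‖u + y‖ < 1 := fun u hu =>
    lt_of_le_of_lt (IsUltrametricDist.norm_add_le_max u y) (max_lt hu hy1)
  have hGne : ∀ u : k, ‖u‖ < 1 → G.eval u ≠ 0 := by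
    intro u hu; rw [hGdef, heval]; exact hpole _ (hsmall u hu)
  have hΩne : ∀ u : k, ‖u‖ < 1 → Ω.eval u ≠ 0 := by
    intro u hu
    rw [hΩdef, heval, eval_mul, eval_C]
    exact mul_ne_zero hgy (hcrit _ (hsmall u hu))
  have hdcomp : ∀ q : k[X], derivative (q.comp (X + C y)) = (derivative q).comp (X + C y) := by
    intro q; rw [derivative_comp]; simp
  have hWid : derivative H * G - H * derivative G = Ω := by
    rw [hHdef, hGdef, hΩdef, hdcomp, hdcomp, ← mul_comp, ← mul_comp, ← sub_comp, hWh]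
  -- constant coefficients
  set g0 : k := g.eval y with hg0def
  set w0 : k := g.eval y * W.eval y with hw0def
  have hG0 : G.coeff 0 = g0 := by rw [coeff_zero_eq_eval_zero, hGdef, heval, zero_add]
  have hΩ0 : Ω.coeff 0 = w0 := by
    rw [coeff_zero_eq_eval_zero, hΩdef, heval, zero_add, eval_mul, eval_C]
  have hw0 : w0 ≠ 0 := mul_ne_zero hgy (hcrit y hy1)
  have hGb : ∀ m, ‖G.coeff m‖ ≤ ‖g0‖ := by
    intro m; rw [← hG0]; exact aux_coeff_le G hGne m
  have hΩb : ∀ m, ‖Ω.coeff m‖ ≤ ‖w0‖ := by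
    intro m; rw [← hΩ0]; exact aux_coeff_le Ω hΩne m
  -- power series
  set Gs : PowerSeries k := (G : PowerSeries k) with hGsdef
  set Hs : PowerSeries k := (H : PowerSeries k) with hHsdef
  have hGs0 : PowerSeries.constantCoeff Gs = g0 := by
    rw [hGsdef, Polynomial.constantCoeff_coe, hG0]
  have hGs0' : PowerSeries.constantCoeff Gs ≠ 0 := by rw [hGs0]; exact hgy
  set ψ : PowerSeries k := Hs * Gs⁻¹ with hψdef
  have hψG : ψ * Gs = Hs := by
    rw [hψdef, mul_assoc, PowerSeries.inv_mul_cancel _ hGs0', mul_one]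
  have hΩs : ((Ω : PowerSeries k)) =
      PowerSeries.derivative k Hs * Gs - Hs * PowerSeries.derivative k Gs := by
    rw [hGsdef, hHsdef, PowerSeries.derivative_coe, PowerSeries.derivative_coe,
      ← Polynomial.coe_mul, ← Polynomial.coe_mul, ← Polynomial.coe_sub, hWid]
  have hkey : PowerSeries.derivative k ψ = (Ω : PowerSeries k) * Gs⁻¹ * Gs⁻¹ := by
    have hL : PowerSeries.derivative k Hs =
        ψ * PowerSeries.derivative k Gs + Gs * PowerSeries.derivative k ψ := by
      rw [← hψG]
      have := Derivation.leibniz (PowerSeries.derivative k) ψ Gs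
      simpa [smul_eq_mul] using this
    have e1 : PowerSeries.derivative k ψ * Gs * Gs = (Ω : PowerSeries k) := by
      rw [hΩs, hL]
      linear_combination (-(PowerSeries.derivative k Gs)) * hψG
    calc PowerSeries.derivative k ψ
        = PowerSeries.derivative k ψ * (Gs * Gs⁻¹) * (Gs * Gs⁻¹) := by
          rw [PowerSeries.mul_inv_cancel _ hGs0']; ring
      _ = (PowerSeries.derivative k ψ * Gs * Gs) * Gs⁻¹ * Gs⁻¹ := by ring
      _ = (Ω : PowerSeries k) * Gs⁻¹ * Gs⁻¹ := by rw [e1]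
  -- coefficients of ψ
  set b : ℕ → k := fun n => PowerSeries.coeff n ψ with hbdef
  have hb0 : b 0 = 0 := by
    rw [hbdef]
    simp only [hψdef, PowerSeries.coeff_zero_eq_constantCoeff_apply, map_mul]
    have : PowerSeries.constantCoeff Hs = 0 := by
      rw [hHsdef, Polynomial.constantCoeff_coe, coeff_zero_eq_eval_zero, hHdef, heval, zero_add, hhy]
    rw [this, zero_mul]
  set M : ℝ := ‖w0‖ * (‖g0‖⁻¹ * ‖g0‖⁻¹) with hMdef
  have hGinvb : ∀ n, ‖PowerSeries.coeff n Gs⁻¹‖ ≤ ‖g0‖⁻¹ := by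
    have := aux_coeff_inv_le Gs hGs0' (by
      intro n
      rw [hGs0, hGsdef, Polynomial.coeff_coe]
      exact hGb n)
    rwa [hGs0] at this
  have hΩsb : ∀ n, ‖PowerSeries.coeff n (Ω : PowerSeries k)‖ ≤ ‖w0‖ := by
    intro n; rw [Polynomial.coeff_coe]; exact hΩb n
  have hDψb : ∀ n, ‖PowerSeries.coeff n (PowerSeries.derivative k ψ)‖ ≤ M := by
    intro n
    rw [hkey, hMdef, ← mul_assoc]
    exact aux_coeff_mul_le _ _ (by positivity) (by positivity)
      (aux_coeff_mul_le _ _ (norm_nonneg _) (by positivity) hΩsb hGinvb) hGinvb n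
  -- b 1 and its norm
  have hb1 : b 1 = w0 * (g0⁻¹ * g0⁻¹) := by
    have e := PowerSeries.coeff_derivative ψ 0
    rw [hkey] at e
    have : PowerSeries.coeff 0 ((Ω : PowerSeries k) * Gs⁻¹ * Gs⁻¹) = w0 * (g0⁻¹ * g0⁻¹) := by
      simp only [PowerSeries.coeff_zero_eq_constantCoeff_apply, map_mul]
      rw [PowerSeries.constantCoeff_inv, hGs0, Polynomial.constantCoeff_coe, hΩ0, mul_assoc]
    rw [this] at e
    rw [hbdef]
    simpa using e.symm
  have hb1ne : b 1 ≠ 0 := by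
    rw [hb1]
    exact mul_ne_zero hw0 (mul_ne_zero (inv_ne_zero hgy) (inv_ne_zero hgy))
  have hb1M : ‖b 1‖ = M := by
    rw [hb1, hMdef]
    simp [norm_mul, norm_inv]
  have hMpos : 0 < M := hb1M ▸ norm_pos_iff.mpr hb1ne
  -- bound ‖b n‖ * ρ^(n-1) ≤ M for n ≥ 1
  have hbn : ∀ n : ℕ, 1 ≤ n → ‖b n‖ * ρ ^ (n - 1) ≤ M := by
    intro n hn
    obtain ⟨j, rfl⟩ : ∃ j, n = j + 1 := ⟨n - 1, (Nat.succ_pred_eq_of_pos hn).symm⟩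
    have e := PowerSeries.coeff_derivative ψ j
    have h1 : ‖b (j+1) * ((j:k)+1)‖ ≤ M := by
      have h1' := hDψb j
      rw [e] at h1'
      simpa [hbdef] using h1'
    have h2 : ρ ^ (j + 1 - 1) ≤ ‖((j:k)+1)‖ := by
      have := aux_rho_pow_le (k := k) p hp hpk (n := j + 1) (Nat.le_add_left 1 j)
      rw [hρdef]
      simpa [Nat.cast_add, Nat.cast_one] using this
    calc ‖b (j+1)‖ * ρ ^ (j + 1 - 1) ≤ ‖b (j+1)‖ * ‖((j:k)+1)‖ :=
          mul_le_mul_of_nonneg_left h2 (norm_nonneg _)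
      _ = ‖b (j+1) * ((j:k)+1)‖ := (norm_mul _ _).symm
      _ ≤ M := h1
  -- coefficients of H
  have hc : ∀ n, H.coeff n = ∑ ij ∈ Finset.HasAntidiagonal.antidiagonal n, b ij.1 * G.coeff ij.2 := by
    intro n
    have : H.coeff n = PowerSeries.coeff n (ψ * Gs) := by
      rw [hψG, hHsdef, Polynomial.coeff_coe]
    rw [this, PowerSeries.coeff_mul]
    refine Finset.sum_congr rfl ?_
    intro ij _
    rw [hbdef, hGsdef, Polynomial.coeff_coe]
  have hc1 : H.coeff 1 = b 1 * g0 := by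
    rw [hc 1, Finset.Nat.sum_antidiagonal_eq_sum_range_succ_mk]
    rw [Finset.sum_range_succ, Finset.sum_range_succ, Finset.sum_range_zero]
    simp only [zero_add, Nat.sub_zero, Nat.sub_self]
    rw [hb0, hG0]
    ring
  -- the evaluation point
  set u : k := x - y with hudef
  have hune : u ≠ 0 := sub_ne_zero.mpr hne
  have hu0 : 0 < ‖u‖ := norm_pos_iff.mpr hune
  have huρ : ‖u‖ < ρ := by
    calc ‖u‖ = ‖x + (-y)‖ := by rw [hudef]; ring_nf
      _ ≤ max ‖x‖ ‖(-y)‖ := IsUltrametricDist.norm_add_le_max _ _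
      _ < ρ := by rw [norm_neg]; exact max_lt hx hy
  have hu1 : ‖u‖ < 1 := huρ.trans hρ1
  have hHu : H.eval u = 0 := by
    rw [hHdef, heval, hudef, sub_add_cancel, hhx]
  -- expand the evaluation as a sum
  set N : ℕ := max (H.natDegree + 1) 2 with hNdef
  have hNH : H.natDegree < N := lt_of_lt_of_le (Nat.lt_succ_self _) (le_max_left _ _)
  have h1N : 1 ∈ Finset.range N := Finset.mem_range.mpr (lt_of_lt_of_le one_lt_two (le_max_right _ _))
  have hS : ∑ n ∈ Finset.range N, H.coeff n * u ^ n = 0 := by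
    rw [← eval_eq_sum_range' hNH u, hHu]
  have hsplitS : H.coeff 1 * u ^ 1 = - ∑ n ∈ (Finset.range N).erase 1, H.coeff n * u ^ n := by
    have := Finset.sum_erase_add (Finset.range N) (fun n => H.coeff n * u ^ n) h1N
    rw [hS] at this
    exact eq_neg_of_add_eq_zero_right this
  -- final estimates
  set T : ℝ := ‖b 1‖ * ‖g0‖ * ‖u‖ with hTdef
  have hTpos : 0 < T := by
    rw [hTdef]
    have := norm_pos_iff.mpr hb1ne
    have := norm_pos_iff.mpr hgy
    positivity
  set r : ℝ := ‖u‖ / ρ with hrdef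
  have hr0 : 0 ≤ r := by positivity
  have hr1 : r < 1 := (div_lt_one hρpos).mpr huρ
  -- uniform bound on coefficients for n ≥ 2
  have hcoeffbd : ∀ n : ℕ, 2 ≤ n → ‖H.coeff n‖ ≤ M / ρ ^ (n - 1) * ‖g0‖ := by
    intro n hn2
    rw [hc n]
    refine IsUltrametricDist.norm_sum_le_of_forall_le_of_nonneg (by positivity) ?_
    intro ij hij
    have hijsum : ij.1 + ij.2 = n := Finset.HasAntidiagonal.mem_antidiagonal.mp hij
    rcases Nat.eq_zero_or_pos ij.1 with h0 | hpos
    · rw [h0, hb0, zero_mul, norm_zero]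
      positivity
    · have hile : ij.1 ≤ n := hijsum ▸ Nat.le_add_right _ _
      have hbi : ‖b ij.1‖ ≤ M / ρ ^ (ij.1 - 1) := by
        rw [le_div_iff₀ (by positivity)]
        exact hbn ij.1 hpos
      have hmono : M / ρ ^ (ij.1 - 1) ≤ M / ρ ^ (n - 1) := by
        refine div_le_div_of_nonneg_left hMpos.le (by positivity) ?_
        exact pow_le_pow_of_le_one hρpos.le hρ1.le (Nat.sub_le_sub_right hile 1)
      rw [norm_mul]
      exact mul_le_mul (hbi.trans hmono) (hGb _) (norm_nonneg _) (by positivity)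
  -- each non-linear term is at most T * r
  have hterm : ∀ n ∈ (Finset.range N).erase 1, ‖H.coeff n * u ^ n‖ ≤ T * r := by
    intro n hn
    have hn1 : n ≠ 1 := Finset.ne_of_mem_erase hn
    rcases Nat.lt_or_ge n 2 with hlt | hge
    · interval_cases n
      · have : H.coeff 0 = 0 := by
          rw [coeff_zero_eq_eval_zero, hHdef, heval, zero_add, hhy]
        rw [this, zero_mul, norm_zero]
        positivity
      · exact absurd rfl hn1
    · have h1n : 1 ≤ n - 1 := by omega
      have hupow : ‖u‖ ^ n = ‖u‖ * ‖u‖ ^ (n - 1) := by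
        rw [← pow_succ']
        congr 1
        omega
      rw [norm_mul, norm_pow]
      calc ‖H.coeff n‖ * ‖u‖ ^ n ≤ (M / ρ ^ (n - 1) * ‖g0‖) * ‖u‖ ^ n := by
            refine mul_le_mul_of_nonneg_right (hcoeffbd n hge) (by positivity)
        _ = M * ‖g0‖ * ‖u‖ * (‖u‖ / ρ) ^ (n - 1) := by
            rw [hupow, div_pow]
            field_simp
        _ ≤ M * ‖g0‖ * ‖u‖ * r := by
            refine mul_le_mul_of_nonneg_left ?_ (by positivity)
            calc (‖u‖ / ρ) ^ (n - 1) = r ^ (n - 1) := by rw [hrdef]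
              _ ≤ r ^ 1 := pow_le_pow_of_le_one hr0 hr1.le h1n
              _ = r := pow_one r
        _ = T * r := by rw [hTdef, hb1M]
  -- conclude
  have hTle : T ≤ T * r := by
    have e1 : ‖H.coeff 1 * u ^ 1‖ = T := by
      rw [hc1, pow_one, norm_mul, norm_mul, hTdef]
    have e2 : ‖∑ n ∈ (Finset.range N).erase 1, H.coeff n * u ^ n‖ ≤ T * r :=
      IsUltrametricDist.norm_sum_le_of_forall_le_of_nonneg (by positivity) hterm
    calc T = ‖H.coeff 1 * u ^ 1‖ := e1.symm
      _ = ‖-∑ n ∈ (Finset.range N).erase 1, H.coeff n * u ^ n‖ := by rw [hsplitS]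
      _ = ‖∑ n ∈ (Finset.range N).erase 1, H.coeff n * u ^ n‖ := norm_neg _
      _ ≤ T * r := e2
  nlinarith
end MainProof

/-- Non-Archimedean Rolle theorem (Robert / Prop. 3.1): if `φ = f/g` has no pole and
no critical point in the open unit disk, then `φ` is injective on the open disk of
radius `‖p‖^(1/(p−1))`. -/
theorem stmt4 {k : Type*} [NormedField k] [IsAlgClosed k] [CharZero k]
    [CompleteSpace k] [IsUltrametricDist k]
    (p : ℕ) (hp : p.Prime) (hpk : ‖(p : k)‖ < 1)
    (f g : Polynomial k) (hco : IsCoprime f g)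
    (hpd : p ≤ max f.natDegree g.natDegree)
    (hpole : ∀ x : k, ‖x‖ < 1 → g.eval x ≠ 0)
    (hcrit : ∀ x : k, ‖x‖ < 1 → (derivative f * g - f * derivative g).eval x ≠ 0) :
    ∀ x y : k, ‖x‖ < ‖(p : k)‖ ^ ((1 : ℝ) / ((p : ℝ) - 1)) →
      ‖y‖ < ‖(p : k)‖ ^ ((1 : ℝ) / ((p : ℝ) - 1)) →
      f.eval x * g.eval y = f.eval y * g.eval x → x = y :=
  stmt4' p hp hpk f g hpole hcrit
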